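/- With respect to the real inner product on ℂ² given by ⟨(z₁,z₂),(w₁,w₂)⟩ = Re(z₁·conj(w₁)) + Re(z₂·conj(w₂)), the Gram matrix of the four vectors v₁ = (1,1), v₂ = (ζ,ζ²), v₃ = (ζ²,ζ⁴), v₄ = (ζ³,ζ) is G = (1/2)·M, where M is the 4×4 matrix with every diagonal entry 4 and every off-diagonal entry −1; that is, ⟨vᵢ,vᵢ⟩ = 2 for each i and ⟨vᵢ,vⱼ⟩ = −1/2 for all i ≠ j. -/

import Mathlib

noncomputable section

/-- The primitive fifth root of unity `ζ = exp(2πi/5)`. -/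
def ζ : ℂ := Complex.exp (2 * Real.pi * Complex.I / 5)

/-- The four vectors `v₁ = (1,1)`, `v₂ = (ζ,ζ²)`, `v₃ = (ζ²,ζ⁴)`, `v₄ = (ζ³,ζ)` in `ℂ²`. -/
def v : Fin 4 → ℂ × ℂ := ![(1, 1), (ζ, ζ ^ 2), (ζ ^ 2, ζ ^ 4), (ζ ^ 3, ζ)]

/-- The real inner product on `ℂ²`:
`⟨(z₁,z₂),(w₁,w₂)⟩ = Re(z₁·conj(w₁)) + Re(z₂·conj(w₂))`. -/
def ip (z w : ℂ × ℂ) : ℝ :=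
  (z.1 * (starRingEnd ℂ) w.1).re + (z.2 * (starRingEnd ℂ) w.2).re

lemma hz5 : ζ ^ 5 = 1 := by
  rw [ζ, ← Complex.exp_nat_mul]
  have : ((5:ℕ) : ℂ) * (2 * Real.pi * Complex.I / 5) = 2 * Real.pi * Complex.I := by
    push_cast; ring
  rw [this, Complex.exp_two_pi_mul_I]

lemma habs : ‖ζ‖ = 1 := by
  rw [ζ, Complex.norm_exp]
  norm_num

lemma hconj : (starRingEnd ℂ) ζ = ζ ^ 4 := by
  have ha := habs
  have h0 : ζ ≠ 0 := by
    intro h; rw [h] at ha; simp at ha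
  have h : ζ⁻¹ = (starRingEnd ℂ) ζ := Complex.inv_eq_conj ha
  rw [← h]
  field_simp
  calc (1:ℂ) = ζ ^ 5 := hz5.symm
  _ = ζ ^ 4 * ζ := by ring

lemma hzne1 : ζ ≠ 1 := by
  rw [ζ]
  intro h
  rw [Complex.exp_eq_one_iff] at h
  obtain ⟨n, hn⟩ := h
  have hpi : (Real.pi : ℂ) ≠ 0 := by
    exact_mod_cast Real.pi_ne_zero
  have hI := Complex.I_ne_zero
  field_simp at hn
  have h2 : (2 : ℂ) * Real.pi * Complex.I ≠ 0 := by
    simp [hpi, hI]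
  have h3 : ((n : ℂ) * 5 - 1) * (2 * Real.pi * Complex.I) = 0 := by
    linear_combination (-(2 * Real.pi * Complex.I)) * hn
  have h4 : (n : ℂ) * 5 - 1 = 0 := by
    rcases mul_eq_zero.1 h3 with h | h
    · exact h
    · exact absurd h h2
  have h5 : ((n * 5 - 1 : ℤ) : ℂ) = 0 := by push_cast; linear_combination h4
  have h6 : (n * 5 - 1 : ℤ) = 0 := by exact_mod_cast h5
  omega

lemma hzsum : ζ ^ 4 + ζ ^ 3 + ζ ^ 2 + ζ + 1 = 0 := by
  have h : (ζ - 1) * (ζ ^ 4 + ζ ^ 3 + ζ ^ 2 + ζ + 1) = 0 := by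
    linear_combination hz5
  rcases mul_eq_zero.1 h with h | h
  · exact absurd (sub_eq_zero.1 h) hzne1
  · exact h

lemma hc2 : (starRingEnd ℂ) (ζ ^ 2) = ζ ^ 3 := by
  rw [map_pow, hconj]; linear_combination ζ^3 * hz5
lemma hc3 : (starRingEnd ℂ) (ζ ^ 3) = ζ ^ 2 := by
  rw [map_pow, hconj]; linear_combination (ζ^7 + ζ^2) * hz5
lemma hc4 : (starRingEnd ℂ) (ζ ^ 4) = ζ := by
  rw [map_pow, hconj]; linear_combination (ζ^11 + ζ^6 + ζ) * hz5

lemma hre14 : ζ.re = (ζ ^ 4).re := by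
  rw [← hconj]; exact (Complex.conj_re ζ).symm
lemma hre23 : (ζ ^ 2).re = (ζ ^ 3).re := by
  rw [← hc2]; exact (Complex.conj_re (ζ^2)).symm
lemma hsumre : (ζ ^ 4).re + (ζ ^ 3).re + (ζ ^ 2).re + ζ.re = -1 := by
  have := congrArg Complex.re hzsum
  simp at this
  linarith

set_option linter.unreachableTactic false in
set_option linter.unusedTactic false in
/-- The Gram matrix of `v₁, v₂, v₃, v₄` is `(1/2)·M` where `M` has diagonal entries `4` and
off-diagonal entries `-1`: `⟨vᵢ,vᵢ⟩ = 2` and `⟨vᵢ,vⱼ⟩ = -1/2` for `i ≠ j`. -/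
theorem gram_matrix_of_basis :
    (∀ i : Fin 4, ip (v i) (v i) = 2) ∧
    (∀ i j : Fin 4, i ≠ j → ip (v i) (v j) = -1 / 2) := by
  have hA : (ζ ^ 4).re + (ζ ^ 3).re = -1/2 := by linarith [hsumre, hre14, hre23]
  have hB : (ζ ^ 3).re + ζ.re = -1/2 := by linarith [hsumre, hre14, hre23]
  have hC : (ζ ^ 2).re + (ζ ^ 4).re = -1/2 := by linarith [hsumre, hre14, hre23]
  have hD : ζ.re + (ζ ^ 2).re = -1/2 := by linarith [hsumre, hre14, hre23]
  have m14 : ζ * ζ ^ 4 = 1 := by linear_combination hz5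
  have m41 : ζ ^ 4 * ζ = 1 := by linear_combination hz5
  have m23 : ζ ^ 2 * ζ ^ 3 = 1 := by linear_combination hz5
  have m32 : ζ ^ 3 * ζ ^ 2 = 1 := by linear_combination hz5
  have m13 : ζ * ζ ^ 3 = ζ ^ 4 := by ring
  have m21 : ζ ^ 2 * ζ = ζ ^ 3 := by ring
  have m12 : ζ * ζ ^ 2 = ζ ^ 3 := by ring
  have m24 : ζ ^ 2 * ζ ^ 4 = ζ := by linear_combination ζ * hz5
  have m43 : ζ ^ 4 * ζ ^ 3 = ζ ^ 2 := by linear_combination ζ ^ 2 * hz5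
  have m22 : ζ ^ 2 * ζ ^ 2 = ζ ^ 4 := by ring
  have m44 : ζ ^ 4 * ζ ^ 4 = ζ ^ 3 := by linear_combination ζ ^ 3 * hz5
  have m34 : ζ ^ 3 * ζ ^ 4 = ζ ^ 2 := by linear_combination ζ ^ 2 * hz5
  have m33 : ζ ^ 3 * ζ ^ 3 = ζ := by linear_combination ζ * hz5
  have m11 : ζ * ζ = ζ ^ 2 := by ring
  constructor
  · intro i
    fin_cases i <;>
      simp [ip, v, hconj, hc2, hc3, hc4, m14, m41, m23, m32, m13, m21, m12, m24,
        m43, m22, m44, m34, m33, m11, -Complex.mul_re] <;>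
      linarith [hA, hB, hC, hD]
  · intro i j hij
    fin_cases i <;> fin_cases j <;>
      simp_all [ip, v, hconj, hc2, hc3, hc4, m14, m41, m23, m32, m13, m21, m12, m24,
        m43, m22, m44, m34, m33, m11, -Complex.mul_re] <;>
      linarith [hA, hB, hC, hD]

end
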